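/- (Second approximation theorem) Let R be a Dedekind domain (not a field) with fraction field K. Let 𝔭₁, …, 𝔭ₖ be distinct nonzero prime ideals of R and let n₁, …, nₖ be integers. Then there exists x ∈ K such that v_{𝔭ᵢ}(x) = nᵢ for each i = 1, …, k, and v_𝔭(x) ≥ 0 for every nonzero prime ideal 𝔭 of R distinct from all the 𝔭ᵢ. -/

import Mathlib

open IsDedekindDomain IsDedekindDomain.HeightOneSpectrum Multiplicative

/-- If `r ∈ 𝔭^m \ 𝔭^(m+1)` then the `𝔭`-adic integer valuation of `r` is `ofAdd (-m)`. -/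
lemma intValuationDef_eq_of_mem_pow_sub {R : Type*} [CommRing R] [IsDomain R]
    [IsDedekindDomain R] (v : HeightOneSpectrum R) {r : R} {m : ℕ}
    (h1 : r ∈ v.asIdeal ^ m) (h2 : r ∉ v.asIdeal ^ (m + 1)) :
    v.intValuationDef r = (ofAdd (-(m : ℤ)) : Multiplicative ℤ) := by
  classical
  have hr : r ≠ 0 := by rintro rfl; exact h2 (zero_mem _)
  have hle : v.intValuationDef r ≤ (ofAdd (-(m : ℤ)) : Multiplicative ℤ) :=
    (intValuation_le_pow_iff_dvd v r m).2 (Ideal.dvd_span_singleton.2 h1)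
  have hnle : ¬ v.intValuationDef r ≤ (ofAdd (-((m + 1 : ℕ) : ℤ)) : Multiplicative ℤ) :=
    fun h => h2 (Ideal.dvd_span_singleton.1 ((intValuation_le_pow_iff_dvd v r (m + 1)).1 h))
  rw [intValuationDef_if_neg v hr] at hle hnle ⊢
  simp only [WithZero.exp] at hle hnle ⊢
  rw [WithZero.coe_le_coe, ofAdd_le] at hle hnle
  have : -((Associates.mk v.asIdeal).count (Associates.mk (Ideal.span {r})).factors : ℤ)
      = -(m : ℤ) := by push_cast at hle hnle ⊢; omega
  rw [this]

theorem stmt14 (R : Type*) [CommRing R] [IsDomain R] [IsDedekindDomain R]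
    (hnf : ¬IsField R)
    (K : Type*) [Field K] [Algebra R K] [IsFractionRing R K]
    (k : ℕ) (p : Fin k → IsDedekindDomain.HeightOneSpectrum R)
    (hp : Function.Injective p) (n : Fin k → ℤ) :
    ∃ x : K,
      (∀ i : Fin k,
        (p i).valuation K x =
          ((Multiplicative.ofAdd (-(n i)) : Multiplicative ℤ) : WithZero (Multiplicative ℤ))) ∧
      (∀ q : IsDedekindDomain.HeightOneSpectrum R, (∀ i : Fin k, q ≠ p i) →
        q.valuation K x ≤ 1) := by
  classical
  rcases Nat.eq_zero_or_pos k with hk | hk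
  · subst hk
    refine ⟨1, fun i => absurd i.isLt (Nat.not_lt_zero _), fun q _ => ?_⟩
    rw [map_one]
  -- general facts about primes
  have hprime : ∀ v : HeightOneSpectrum R, Prime v.asIdeal :=
    fun v => Ideal.prime_of_isPrime v.ne_bot v.isPrime
  have hne : ∀ v w : HeightOneSpectrum R, v ≠ w → v.asIdeal ≠ w.asIdeal := by
    intro v w h hh; exact h (HeightOneSpectrum.ext hh)
  -- the shift c
  set c : ℕ := Finset.univ.sup fun i => (n i).natAbs with hcdef
  have hc : ∀ i, 0 ≤ n i + c := by
    intro i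
    have h1 : (n i).natAbs ≤ c := Finset.le_sup (f := fun i => (n i).natAbs) (Finset.mem_univ i)
    omega
  set m : Fin k → ℕ := fun i => (n i + c).toNat with hmdef
  have hm : ∀ i, (m i : ℤ) = n i + c := fun i => Int.toNat_of_nonneg (hc i)
  -- choose local elements of exact valuation c
  have hex : ∀ (v : HeightOneSpectrum R) (e : ℕ), ∃ z ∈ v.asIdeal ^ e, z ∉ v.asIdeal ^ (e + 1) :=
    fun v e => Ideal.exists_mem_pow_notMem_pow_succ v.asIdeal v.ne_bot v.isPrime.ne_top e
  choose zb hzb1 hzb2 using fun i : Fin k => hex (p i) c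
  -- construct b by CRT
  obtain ⟨b, hb⟩ := IsDedekindDomain.exists_forall_sub_mem_ideal
    (s := Finset.univ.image p) (fun v => v.asIdeal) (fun _ => c + 1)
    (fun v _ => hprime v)
    (fun v _ w _ hvw => hne v w hvw)
    (fun v => Function.extend p zb 0 v.1)
  have hbmem : ∀ i : Fin k, b ∈ (p i).asIdeal ^ c ∧ b ∉ (p i).asIdeal ^ (c + 1) := by
    intro i
    have hmem : p i ∈ Finset.univ.image p := Finset.mem_image_of_mem p (Finset.mem_univ i)
    have h := hb (p i) hmem
    rw [hp.extend_apply] at h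
    constructor
    · have : b = (b - zb i) + zb i := by ring
      rw [this]
      exact add_mem (Ideal.pow_le_pow_right (Nat.le_succ c) h) (hzb1 i)
    · intro hbin
      exact hzb2 i (by simpa using sub_mem hbin h)
  have hb0 : b ≠ 0 := by
    rintro rfl
    exact (hbmem ⟨0, hk⟩).2 (zero_mem _)
  have hspanb : (Ideal.span {b} : Ideal R) ≠ 0 := by
    simpa [Ideal.span_singleton_eq_bot] using hb0
  -- the exponent of q in b
  set d : HeightOneSpectrum R → ℕ :=
    fun v => (Associates.mk v.asIdeal).count (Associates.mk (Ideal.span {b})).factors with hddef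
  have hbv : ∀ v : HeightOneSpectrum R,
      v.intValuationDef b = (ofAdd (-(d v : ℤ)) : Multiplicative ℤ) :=
    fun v => intValuationDef_if_neg v hb0
  have hbc : ∀ i : Fin k, (p i).intValuationDef b = (ofAdd (-(c : ℤ)) : Multiplicative ℤ) :=
    fun i => intValuationDef_eq_of_mem_pow_sub (p i) (hbmem i).1 (hbmem i).2
  -- the finite set of primes dividing b
  set Sb : Finset (HeightOneSpectrum R) := (Ideal.finite_factors hspanb).toFinset with hSbdef
  -- construct a by CRT
  choose za hza1 hza2 using fun i : Fin k => hex (p i) (m i)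
  obtain ⟨a, ha⟩ := IsDedekindDomain.exists_forall_sub_mem_ideal
    (s := Finset.univ.image p ∪ Sb) (fun v => v.asIdeal)
    (Function.extend p (fun i => m i + 1) d)
    (fun v _ => hprime v)
    (fun v _ w _ hvw => hne v w hvw)
    (fun v => Function.extend p za 0 v.1)
  have hamem : ∀ i : Fin k, a ∈ (p i).asIdeal ^ (m i) ∧ a ∉ (p i).asIdeal ^ (m i + 1) := by
    intro i
    have hmem : p i ∈ Finset.univ.image p ∪ Sb :=
      Finset.mem_union_left _ (Finset.mem_image_of_mem p (Finset.mem_univ i))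
    have h := ha (p i) hmem
    rw [hp.extend_apply, hp.extend_apply] at h
    constructor
    · have : a = (a - za i) + za i := by ring
      rw [this]
      exact add_mem (Ideal.pow_le_pow_right (Nat.le_succ _) h) (hza1 i)
    · intro hain
      exact hza2 i (by simpa using sub_mem hain h)
  have hac : ∀ i : Fin k,
      (p i).intValuationDef a = (ofAdd (-(m i : ℤ)) : Multiplicative ℤ) :=
    fun i => intValuationDef_eq_of_mem_pow_sub (p i) (hamem i).1 (hamem i).2
  -- the element x
  refine ⟨algebraMap R K a / algebraMap R K b, ?_, ?_⟩
  · intro i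
    rw [Valuation.map_div, valuation_of_algebraMap, valuation_of_algebraMap,
      intValuation_apply, intValuation_apply, hac i, hbc i, ← WithZero.coe_div,
      WithZero.coe_inj, ← ofAdd_sub]
    congr 1
    have := hm i
    omega
  · intro q hq
    have hqnp : q ∉ Finset.univ.image p := by
      intro hmem
      obtain ⟨i, -, rfl⟩ := Finset.mem_image.mp hmem
      exact hq i rfl
    rw [Valuation.map_div, valuation_of_algebraMap, valuation_of_algebraMap,
      intValuation_apply, intValuation_apply]
    by_cases hqS : q ∈ Sb
    · -- q divides b; a was chosen in q ^ d q
      have hmem : q ∈ Finset.univ.image p ∪ Sb := Finset.mem_union_right _ hqS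
      have hnex : ¬∃ i, p i = q := fun ⟨i, hi⟩ => hq i hi.symm
      have h := ha q hmem
      simp only [Function.extend_apply' _ _ _ hnex, Pi.zero_apply, sub_zero] at h
      have hale : q.intValuationDef a ≤ (ofAdd (-(d q : ℤ)) : Multiplicative ℤ) :=
        (intValuation_le_pow_iff_dvd q a (d q)).2 (Ideal.dvd_span_singleton.2 h)
      rw [hbv q]
      rw [div_le_one₀ (by exact zero_lt_iff.mpr WithZero.coe_ne_zero)]
      exact hale
    · -- q does not divide b, so v_q(b) = 1
      have hnd : ¬ q.asIdeal ∣ Ideal.span {b} := by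
        intro hd
        exact hqS (by rw [hSbdef, Set.Finite.mem_toFinset]; exact hd)
      have hb1 : q.intValuationDef b = 1 := by
        have hlt := (intValuation_lt_one_iff_dvd q b).not.mpr hnd
        have hle := intValuation_le_one q b
        exact le_antisymm hle (not_lt.mp hlt)
      rw [hb1, div_one]
      exact intValuation_le_one q a
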